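/- Let (G,Δ,ε,φ,S,α,β) be a finite-dimensional quasi-Hopf algebra over a field k with invertible antipode S, and let R ∈ G⊗G be quasitriangular. Writing φ = Xʲ⊗Yʲ⊗Zʲ and φ⁻¹ = Pⁱ⊗Qⁱ⊗Rⁱ (implicit summation) and q_ρ := Xⁱ ⊗ S⁻¹(α·Zⁱ)·Yⁱ, one has R⁻¹ = [Xʲ·β·S(Pⁱ·Yʲ) ⊗ 1] · (S⊗id)(q_ρᵒᵖ·R) · [(Rⁱ⊗Qⁱ)·Δᵒᵖ(Zʲ)], where q_ρᵒᵖ denotes q_ρ with its two tensor legs interchanged and Δᵒᵖ := τ∘Δ is the opposite coproduct. -/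

import Mathlib

open TensorProduct

set_option maxSynthPendingDepth 8
set_option synthInstance.maxHeartbeats 1000000
set_option maxHeartbeats 1000000

noncomputable section

namespace QHA

variable (k G : Type) [Field k] [Ring G] [Algebra k G]

/-- The data of a (finite-dimensional) quasi-Hopf algebra: coproduct, counit,
reassociator (together with its inverse), antipode (as an invertible linear map)
and the elements `α`, `β`. -/
structure QuasiHopfData : Type where
  Δ : G →ₐ[k] G ⊗[k] G
  ε : G →ₐ[k] k
  φ : G ⊗[k] (G ⊗[k] G)
  φ' : G ⊗[k] (G ⊗[k] G)
  S : G ≃ₗ[k] G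
  α : G
  β : G

/-- Swap of legs 2 and 3 of the triple tensor product. -/
def c23 : G ⊗[k] (G ⊗[k] G) →ₐ[k] G ⊗[k] (G ⊗[k] G) :=
  Algebra.TensorProduct.map (AlgHom.id k G) (Algebra.TensorProduct.comm k G G).toAlgHom

/-- Swap of legs 1 and 2 of the triple tensor product. -/
def c12 : G ⊗[k] (G ⊗[k] G) →ₐ[k] G ⊗[k] (G ⊗[k] G) :=
  ((Algebra.TensorProduct.assoc k k k G G G).toAlgHom.comp
    (Algebra.TensorProduct.map (Algebra.TensorProduct.comm k G G).toAlgHom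
      (AlgHom.id k G))).comp
    (Algebra.TensorProduct.assoc k k k G G G).symm.toAlgHom

/-- Place an element of `G ⊗ G` in legs 1,2 of `G ⊗ G ⊗ G`. -/
def e12 : G ⊗[k] G →ₐ[k] G ⊗[k] (G ⊗[k] G) :=
  Algebra.TensorProduct.map (AlgHom.id k G) Algebra.TensorProduct.includeLeft

/-- Place an element of `G ⊗ G` in legs 1,3 of `G ⊗ G ⊗ G`. -/
def e13 : G ⊗[k] G →ₐ[k] G ⊗[k] (G ⊗[k] G) :=
  Algebra.TensorProduct.map (AlgHom.id k G) Algebra.TensorProduct.includeRight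

/-- Place an element of `G ⊗ G` in legs 2,3 of `G ⊗ G ⊗ G`. -/
def e23 : G ⊗[k] G →ₐ[k] G ⊗[k] (G ⊗[k] G) :=
  Algebra.TensorProduct.includeRight

/-- `ψ ⊗ 1`, an element of `G ⊗ G ⊗ G` placed in legs 1,2,3 of the 4-fold
tensor product. -/
def padR (ψ : G ⊗[k] (G ⊗[k] G)) : G ⊗[k] (G ⊗[k] (G ⊗[k] G)) :=
  (Algebra.TensorProduct.map (AlgHom.id k G) (Algebra.TensorProduct.assoc k k k G G G).toAlgHom)
    ((Algebra.TensorProduct.assoc k k k G (G ⊗[k] G) G) (ψ ⊗ₜ[k] (1:G)))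

/-- The product on the tensor product of two (not necessarily unital/associative)
algebras given by bilinear multiplications `mV`, `mW`. -/
def mulTens {V W : Type} [AddCommGroup V] [Module k V] [AddCommGroup W] [Module k W]
    (mV : V →ₗ[k] V →ₗ[k] V) (mW : W →ₗ[k] W →ₗ[k] W) :
    (V ⊗[k] W) →ₗ[k] (V ⊗[k] W) →ₗ[k] (V ⊗[k] W) :=
  TensorProduct.curry ((TensorProduct.map (TensorProduct.lift mV) (TensorProduct.lift mW)) ∘ₗ
    (TensorProduct.tensorTensorTensorComm k V W V W).toLinearMap)

/-- The functional `x ↦ χ (d * x * c)`; this is `c ⇀ χ ↼ d` in Hopf algebra notation. -/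
def shiftF (c d : G) (χ : Module.Dual k G) : Module.Dual k G :=
  χ ∘ₗ (LinearMap.mulLeft k d) ∘ₗ (LinearMap.mulRight k c)

namespace QuasiHopfData

variable {k G}
variable (H : QuasiHopfData k G)

/-- The opposite coproduct `Δᵒᵖ = τ ∘ Δ`. -/
def Δop : G →ₐ[k] G ⊗[k] G := (Algebra.TensorProduct.comm k G G).toAlgHom.comp H.Δ

/-- `(id ⊗ Δ) ∘ Δ`. -/
def ΔR : G →ₐ[k] G ⊗[k] (G ⊗[k] G) :=
  (Algebra.TensorProduct.map (AlgHom.id k G) H.Δ).comp H.Δ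

/-- `(Δ ⊗ id) ∘ Δ` (reassociated); this is the two-sided coaction `δ`. -/
def ΔL : G →ₐ[k] G ⊗[k] (G ⊗[k] G) :=
  ((Algebra.TensorProduct.assoc k k k G G G).toAlgHom.comp
    (Algebra.TensorProduct.map H.Δ (AlgHom.id k G))).comp H.Δ

/-- `id ⊗ id ⊗ Δ` on the triple tensor product. -/
def ooΔ : G ⊗[k] (G ⊗[k] G) →ₐ[k] G ⊗[k] (G ⊗[k] (G ⊗[k] G)) :=
  Algebra.TensorProduct.map (AlgHom.id k G) (Algebra.TensorProduct.map (AlgHom.id k G) H.Δ)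

/-- `Δ ⊗ id ⊗ id` on the triple tensor product. -/
def Δoo : G ⊗[k] (G ⊗[k] G) →ₐ[k] G ⊗[k] (G ⊗[k] (G ⊗[k] G)) :=
  (Algebra.TensorProduct.assoc k k k G G (G ⊗[k] G)).toAlgHom.comp
    (Algebra.TensorProduct.map H.Δ (AlgHom.id k (G ⊗[k] G)))

/-- `id ⊗ Δ ⊗ id` on the triple tensor product. -/
def oΔo : G ⊗[k] (G ⊗[k] G) →ₐ[k] G ⊗[k] (G ⊗[k] (G ⊗[k] G)) :=
  (Algebra.TensorProduct.map (AlgHom.id k G)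
      (Algebra.TensorProduct.assoc k k k G G G).toAlgHom).comp
    (Algebra.TensorProduct.map (AlgHom.id k G)
      (Algebra.TensorProduct.map H.Δ (AlgHom.id k G)))

/-- Contraction of the first tensor leg with the counit. -/
def κ1 (M : Type) [Ring M] [Algebra k M] : G ⊗[k] M →ₐ[k] M :=
  (Algebra.TensorProduct.lid k M).toAlgHom.comp
    (Algebra.TensorProduct.map H.ε (AlgHom.id k M))

/-- Contraction of the last tensor leg with the counit. -/
def κ2 (M : Type) [Ring M] [Algebra k M] : M ⊗[k] G →ₐ[k] M :=
  (Algebra.TensorProduct.rid k k M).toAlgHom.comp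
    (Algebra.TensorProduct.map (AlgHom.id k M) H.ε)

/-- The multiplication on the dual space `Ĝ`, `⟨χξ, a⟩ = ⟨χ ⊗ ξ, Δ(a)⟩`. -/
def dmul (χ ξ : Module.Dual k G) : Module.Dual k G :=
  ((LinearMap.mul' k k) ∘ₗ (TensorProduct.map χ ξ)) ∘ₗ H.Δ.toLinearMap

/-- The axioms of a quasi-Hopf algebra for the data `H`. -/
structure IsQuasiHopf : Prop where
  S_mul : ∀ a b : G, H.S (a * b) = H.S b * H.S a
  S_one : H.S 1 = 1
  φ_mul_inv : H.φ * H.φ' = 1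
  φ_inv_mul : H.φ' * H.φ = 1
  Δ_assoc : ∀ a : G, H.ΔR a * H.φ = H.φ * H.ΔL a
  pentagon : H.ooΔ H.φ * H.Δoo H.φ =
    ((1:G) ⊗ₜ[k] H.φ) * H.oΔo H.φ * QHA.padR k G H.φ
  counit_left : ∀ a : G, H.κ1 G (H.Δ a) = a
  counit_right : ∀ a : G, H.κ2 G (H.Δ a) = a
  counit_mid : (Algebra.TensorProduct.map (AlgHom.id k G) (H.κ1 G)) H.φ = 1
  antipode_left : ∀ a : G,
    (LinearMap.mul' k G) (TensorProduct.map
      ((LinearMap.mulRight k H.α) ∘ₗ H.S.toLinearMap) LinearMap.id (H.Δ a)) = H.ε a • H.α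
  antipode_right : ∀ a : G,
    (LinearMap.mul' k G) (TensorProduct.map
      (LinearMap.mulRight k H.β) H.S.toLinearMap (H.Δ a)) = H.ε a • H.β
  antipode_φ :
    (LinearMap.mul' k G) (TensorProduct.map (LinearMap.mulRight k H.β)
      ((LinearMap.mul' k G) ∘ₗ (TensorProduct.map
        ((LinearMap.mulRight k H.α) ∘ₗ H.S.toLinearMap) LinearMap.id)) H.φ) = 1
  antipode_φ' :
    (LinearMap.mul' k G) (TensorProduct.map
      ((LinearMap.mulRight k H.α) ∘ₗ H.S.toLinearMap)
      ((LinearMap.mul' k G) ∘ₗ (TensorProduct.map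
        (LinearMap.mulRight k H.β) H.S.toLinearMap)) H.φ') = 1

/-- Quasitriangularity of an element `R` (with specified two-sided inverse `Rinv`)
for the quasi-Hopf algebra `H`:  the intertwining property and the two hexagon
relations, with the leg-numbering conventions of the paper. -/
structure IsQT (R Rinv : G ⊗[k] G) : Prop where
  mul_inv : R * Rinv = 1
  inv_mul : Rinv * R = 1
  intertwine : ∀ a : G, H.Δop a * R = R * H.Δ a
  hexagon1 : (Algebra.TensorProduct.assoc k k k G G G)
      ((Algebra.TensorProduct.map H.Δ (AlgHom.id k G)) R)
    = QHA.c23 k G (QHA.c12 k G H.φ) * QHA.e13 k G R * QHA.c23 k G H.φ' *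
      QHA.e23 k G R * H.φ
  hexagon2 : (Algebra.TensorProduct.map (AlgHom.id k G) H.Δ) R
    = QHA.c12 k G (QHA.c23 k G H.φ') * QHA.e13 k G R * QHA.c12 k G H.φ *
      QHA.e12 k G R * H.φ'

end QuasiHopfData

end QHA

section Aux
open QHA TensorProduct

variable {k G : Type} [Field k] [Ring G] [Algebra k G]

lemma aux_c23_tmul (a b c : G) : QHA.c23 k G (a ⊗ₜ[k] (b ⊗ₜ[k] c)) = a ⊗ₜ[k] (c ⊗ₜ[k] b) := by
  simp [QHA.c23]

lemma aux_c12_tmul (a b c : G) : QHA.c12 k G (a ⊗ₜ[k] (b ⊗ₜ[k] c)) = b ⊗ₜ[k] (a ⊗ₜ[k] c) := by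
  simp [QHA.c12]

lemma aux_e13_tmul (a b : G) : QHA.e13 k G (a ⊗ₜ[k] b) = a ⊗ₜ[k] ((1:G) ⊗ₜ[k] b) := by
  simp [QHA.e13]

lemma aux_e23_apply (w : G ⊗[k] G) : QHA.e23 k G w = (1:G) ⊗ₜ[k] w := by
  simp [QHA.e23]

lemma aux_padR_tmul (a b c : G) :
    QHA.padR k G (a ⊗ₜ[k] (b ⊗ₜ[k] c)) = a ⊗ₜ[k] (b ⊗ₜ[k] (c ⊗ₜ[k] (1:G))) := by
  simp [QHA.padR]

variable (H : QuasiHopfData k G)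

lemma aux_kappa1_tmul {M : Type} [Ring M] [Algebra k M] (a : G) (m : M) :
    H.κ1 M (a ⊗ₜ[k] m) = H.ε a • m := by
  simp [QuasiHopfData.κ1]

lemma aux_ooD_tmul (a b c : G) :
    H.ooΔ (a ⊗ₜ[k] (b ⊗ₜ[k] c)) = a ⊗ₜ[k] (b ⊗ₜ[k] H.Δ c) := by
  simp [QuasiHopfData.ooΔ]

lemma aux_Doo_tmul (a : G) (w : G ⊗[k] G) :
    H.Δoo (a ⊗ₜ[k] w) = (Algebra.TensorProduct.assoc k k k G G (G ⊗[k] G)) ((H.Δ a) ⊗ₜ[k] w) := by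
  simp [QuasiHopfData.Δoo]

lemma aux_oDo_tmul (a b c : G) :
    H.oΔo (a ⊗ₜ[k] (b ⊗ₜ[k] c))
      = a ⊗ₜ[k] ((Algebra.TensorProduct.assoc k k k G G G) ((H.Δ b) ⊗ₜ[k] c)) := by
  simp [QuasiHopfData.oΔo]

lemma aux_Dop_apply (a : G) :
    H.Δop a = (Algebra.TensorProduct.comm k G G) (H.Δ a) := by
  simp [QuasiHopfData.Δop]

/-- `κ1` of `assoc (t ⊗ c)` with `t : G ⊗ G`. -/
lemma aux_k1_assoc (t : G ⊗[k] G) (c : G) :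
    H.κ1 (G ⊗[k] G) ((Algebra.TensorProduct.assoc k k k G G G) (t ⊗ₜ[k] c))
      = (H.κ1 G t) ⊗ₜ[k] c := by
  induction t using TensorProduct.induction_on with
  | zero => simp [TensorProduct.zero_tmul]
  | tmul x y =>
      simp [Algebra.TensorProduct.assoc_tmul, aux_kappa1_tmul, TensorProduct.smul_tmul']
  | add u v hu hv =>
      simp [TensorProduct.add_tmul, hu, hv, TensorProduct.add_tmul]

/-- two `κ1`'s of `assoc (t ⊗ w)`. -/
lemma aux_kk_assoc (t : G ⊗[k] G) (w : G ⊗[k] G) :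
    H.κ1 (G ⊗[k] G) (H.κ1 (G ⊗[k] (G ⊗[k] G))
        ((Algebra.TensorProduct.assoc k k k G G (G ⊗[k] G)) (t ⊗ₜ[k] w)))
      = ((LinearMap.mul' k k) ((TensorProduct.map H.ε.toLinearMap H.ε.toLinearMap) t)) • w := by
  induction t using TensorProduct.induction_on with
  | zero => simp [TensorProduct.zero_tmul]
  | tmul x y =>
      simp [Algebra.TensorProduct.assoc_tmul, aux_kappa1_tmul, smul_smul]
  | add u v hu hv =>
      simp [TensorProduct.add_tmul, hu, hv, add_smul]

lemma aux_eps_eps_Δ (hH : H.IsQuasiHopf) (a : G) :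
    (LinearMap.mul' k k) ((TensorProduct.map H.ε.toLinearMap H.ε.toLinearMap) (H.Δ a))
      = H.ε a := by
  have key : ∀ t : G ⊗[k] G,
      (LinearMap.mul' k k) ((TensorProduct.map H.ε.toLinearMap H.ε.toLinearMap) t)
        = H.ε (H.κ1 G t) := by
    intro t
    induction t using TensorProduct.induction_on with
    | zero => simp
    | tmul x y => simp [aux_kappa1_tmul, map_smul, smul_eq_mul]
    | add u v hu hv => simp [hu, hv]
  rw [key, hH.counit_left]

end Aux
section Aux2
open QHA TensorProduct

variable {k G : Type} [Field k] [Ring G] [Algebra k G]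
variable (H : QuasiHopfData k G)
variable {ι ι' : Type} [Fintype ι] [Fintype ι']
variable {X Y Z : ι → G} {P Q R₀ : ι' → G}

/-- counit-mid in sum form. -/
lemma aux_cm (hφ : H.φ = ∑ j : ι, X j ⊗ₜ[k] (Y j ⊗ₜ[k] Z j)) (hH : H.IsQuasiHopf) :
    ∑ j : ι, H.ε (Y j) • (X j ⊗ₜ[k] Z j) = (1 : G ⊗[k] G) := by
  have h := hH.counit_mid
  rw [hφ, map_sum] at h
  simpa [aux_kappa1_tmul, TensorProduct.tmul_smul] using h

lemma aux_z0 (hφ : H.φ = ∑ j : ι, X j ⊗ₜ[k] (Y j ⊗ₜ[k] Z j)) (hH : H.IsQuasiHopf) :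
    ∑ j : ι, (H.ε (X j) * H.ε (Y j)) • Z j = (1:G) := by
  have h := congrArg (H.κ1 G) (aux_cm H hφ hH)
  rw [map_sum, map_one] at h
  calc ∑ j : ι, (H.ε (X j) * H.ε (Y j)) • Z j
      = ∑ j : ι, H.κ1 G (H.ε (Y j) • (X j ⊗ₜ[k] Z j)) := by
        refine Finset.sum_congr rfl fun j _ => ?_
        simp [aux_kappa1_tmul, smul_smul, mul_comm]
    _ = 1 := h

/-- `(ε ⊗ id ⊗ id) φ = 1`. -/
lemma aux_e_one (hφ : H.φ = ∑ j : ι, X j ⊗ₜ[k] (Y j ⊗ₜ[k] Z j))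
    (hφ' : H.φ' = ∑ i : ι', P i ⊗ₜ[k] (Q i ⊗ₜ[k] R₀ i)) (hH : H.IsQuasiHopf) :
    ∑ j : ι, H.ε (X j) • (Y j ⊗ₜ[k] Z j) = (1 : G ⊗[k] G) := by
  set e : G ⊗[k] G := ∑ j : ι, H.ε (X j) • (Y j ⊗ₜ[k] Z j) with he
  set e' : G ⊗[k] G := ∑ i : ι', H.ε (P i) • (Q i ⊗ₜ[k] R₀ i) with he'
  -- κ1 of φ and φ'
  have hk1φ : H.κ1 (G ⊗[k] G) H.φ = e := by
    rw [hφ, map_sum]; simp [aux_kappa1_tmul, he]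
  have hk1φ' : H.κ1 (G ⊗[k] G) H.φ' = e' := by
    rw [hφ', map_sum]; simp [aux_kappa1_tmul, he']
  have hee' : e * e' = 1 := by
    rw [← hk1φ, ← hk1φ', ← map_mul, hH.φ_mul_inv, map_one]
  -- apply the double contraction to the pentagon
  have hp := congrArg (fun x => H.κ1 (G ⊗[k] G) (H.κ1 (G ⊗[k] (G ⊗[k] G)) x)) hH.pentagon
  simp only [map_mul] at hp
  have h1 : H.κ1 (G ⊗[k] G) (H.κ1 (G ⊗[k] (G ⊗[k] G)) (H.ooΔ H.φ)) = 1 := by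
    rw [hφ, map_sum, map_sum, map_sum]
    have : ∀ j : ι, H.κ1 (G ⊗[k] G) (H.κ1 (G ⊗[k] (G ⊗[k] G)) (H.ooΔ (X j ⊗ₜ[k] (Y j ⊗ₜ[k] Z j))))
        = (H.ε (X j) * H.ε (Y j)) • H.Δ (Z j) := by
      intro j
      rw [aux_ooD_tmul]
      simp [aux_kappa1_tmul, smul_smul, mul_comm]
    rw [Finset.sum_congr rfl (fun j _ => this j)]
    have : ∑ j : ι, (H.ε (X j) * H.ε (Y j)) • H.Δ (Z j)
        = H.Δ (∑ j : ι, (H.ε (X j) * H.ε (Y j)) • Z j) := by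
      rw [map_sum]; simp [map_smul]
    rw [this, aux_z0 H hφ hH, map_one]
  have h2 : H.κ1 (G ⊗[k] G) (H.κ1 (G ⊗[k] (G ⊗[k] G)) (H.Δoo H.φ)) = e := by
    rw [hφ, map_sum, map_sum, map_sum]
    rw [he]
    refine Finset.sum_congr rfl fun j _ => ?_
    rw [aux_Doo_tmul, aux_kk_assoc, aux_eps_eps_Δ H hH]
  have h3 : H.κ1 (G ⊗[k] G) (H.κ1 (G ⊗[k] (G ⊗[k] G)) ((1:G) ⊗ₜ[k] H.φ)) = e := by
    rw [aux_kappa1_tmul, map_one, one_smul, hk1φ]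
  have h4 : H.κ1 (G ⊗[k] G) (H.κ1 (G ⊗[k] (G ⊗[k] G)) (H.oΔo H.φ)) = e := by
    rw [hφ, map_sum, map_sum, map_sum, he]
    refine Finset.sum_congr rfl fun j _ => ?_
    rw [aux_oDo_tmul, aux_kappa1_tmul, map_smul, aux_k1_assoc, hH.counit_left]
  have h5 : H.κ1 (G ⊗[k] G) (H.κ1 (G ⊗[k] (G ⊗[k] G)) (QHA.padR k G H.φ)) = 1 := by
    rw [hφ]
    have hsum : QHA.padR k G (∑ j : ι, X j ⊗ₜ[k] (Y j ⊗ₜ[k] Z j))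
        = ∑ j : ι, QHA.padR k G (X j ⊗ₜ[k] (Y j ⊗ₜ[k] Z j)) := by
      unfold QHA.padR; rw [TensorProduct.sum_tmul, map_sum, map_sum]
    rw [hsum, map_sum, map_sum]
    have : ∀ j : ι, H.κ1 (G ⊗[k] G) (H.κ1 (G ⊗[k] (G ⊗[k] G)) (QHA.padR k G (X j ⊗ₜ[k] (Y j ⊗ₜ[k] Z j))))
        = (H.ε (X j) * H.ε (Y j)) • (Z j ⊗ₜ[k] (1:G)) := by
      intro j
      rw [aux_padR_tmul]
      simp [aux_kappa1_tmul, smul_smul, mul_comm]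
    rw [Finset.sum_congr rfl (fun j _ => this j)]
    have : ∑ j : ι, (H.ε (X j) * H.ε (Y j)) • (Z j ⊗ₜ[k] (1:G))
        = (∑ j : ι, (H.ε (X j) * H.ε (Y j)) • Z j) ⊗ₜ[k] (1:G) := by
      rw [TensorProduct.sum_tmul]
      simp [TensorProduct.smul_tmul']
    rw [this, aux_z0 H hφ hH, Algebra.TensorProduct.one_def]
  rw [h1, h2, h3, h4, h5] at hp
  -- hp : 1 * e = e * e * 1
  have hesq : e = e * e := by simpa using hp
  have : (1 : G ⊗[k] G) = e := by
    calc (1 : G ⊗[k] G) = e * e' := hee'.symm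
      _ = (e * e) * e' := by rw [← hesq]
      _ = e * (e * e') := by rw [mul_assoc]
      _ = e := by rw [hee', mul_one]
  exact this.symm

/-- `(ε ⊗ id ⊗ id) φ' = 1`. -/
lemma aux_e'_one (hφ : H.φ = ∑ j : ι, X j ⊗ₜ[k] (Y j ⊗ₜ[k] Z j))
    (hφ' : H.φ' = ∑ i : ι', P i ⊗ₜ[k] (Q i ⊗ₜ[k] R₀ i)) (hH : H.IsQuasiHopf) :
    ∑ i : ι', H.ε (P i) • (Q i ⊗ₜ[k] R₀ i) = (1 : G ⊗[k] G) := by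
  have hk1φ : H.κ1 (G ⊗[k] G) H.φ = (1 : G ⊗[k] G) := by
    rw [hφ, map_sum]
    simpa [aux_kappa1_tmul] using aux_e_one H hφ hφ' hH
  have hk1φ' : H.κ1 (G ⊗[k] G) H.φ' = ∑ i : ι', H.ε (P i) • (Q i ⊗ₜ[k] R₀ i) := by
    rw [hφ', map_sum]; simp [aux_kappa1_tmul]
  have h := congrArg (H.κ1 (G ⊗[k] G)) hH.φ_mul_inv
  rw [map_mul, map_one, hk1φ, hk1φ', one_mul] at h
  exact h

end Aux2
section Aux3
open QHA TensorProduct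

variable {k G : Type} [Field k] [Ring G] [Algebra k G]

/-- The contraction `x ⊗ y ↦ S(x) α y`. -/
noncomputable def auxHa (H : QuasiHopfData k G) : G ⊗[k] G →ₗ[k] G :=
  (LinearMap.mul' k G) ∘ₗ (TensorProduct.map
    ((LinearMap.mulRight k H.α) ∘ₗ H.S.toLinearMap) LinearMap.id)

/-- The contraction `x ⊗ y ↦ x β S(y)`. -/
noncomputable def auxHb (H : QuasiHopfData k G) : G ⊗[k] G →ₗ[k] G :=
  (LinearMap.mul' k G) ∘ₗ (TensorProduct.map (LinearMap.mulRight k H.β) H.S.toLinearMap)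

variable (H : QuasiHopfData k G)

lemma auxHa_tmul (x y : G) : auxHa H (x ⊗ₜ[k] y) = H.S x * H.α * y := by
  simp [auxHa, mul_assoc]

lemma auxHb_tmul (x y : G) : auxHb H (x ⊗ₜ[k] y) = x * H.β * H.S y := by
  simp [auxHb, mul_assoc]

lemma auxHa_Δ (hH : H.IsQuasiHopf) (a : G) : auxHa H (H.Δ a) = H.ε a • H.α :=
  hH.antipode_left a

lemma auxHb_Δ (hH : H.IsQuasiHopf) (a : G) : auxHb H (H.Δ a) = H.ε a • H.β :=
  hH.antipode_right a

variable {ι ι' : Type} [Fintype ι] [Fintype ι']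
variable {X Y Z : ι → G} {P Q R₀ : ι' → G}

lemma aux_cm_sw (hφ : H.φ = ∑ j : ι, X j ⊗ₜ[k] (Y j ⊗ₜ[k] Z j)) (hH : H.IsQuasiHopf) :
    ∑ j : ι, H.ε (Y j) • (Z j ⊗ₜ[k] X j) = (1 : G ⊗[k] G) := by
  have h := congrArg (Algebra.TensorProduct.comm k G G) (aux_cm H hφ hH)
  rw [map_sum, map_one] at h
  simpa [Algebra.TensorProduct.comm_tmul] using h

lemma aux_e'_sw (hφ : H.φ = ∑ j : ι, X j ⊗ₜ[k] (Y j ⊗ₜ[k] Z j))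
    (hφ' : H.φ' = ∑ i : ι', P i ⊗ₜ[k] (Q i ⊗ₜ[k] R₀ i)) (hH : H.IsQuasiHopf) :
    ∑ i : ι', H.ε (P i) • (R₀ i ⊗ₜ[k] Q i) = (1 : G ⊗[k] G) := by
  have h := congrArg (Algebra.TensorProduct.comm k G G) (aux_e'_one H hφ hφ' hH)
  rw [map_sum, map_one] at h
  simpa [Algebra.TensorProduct.comm_tmul] using h

lemma aux_aphi (hφ : H.φ = ∑ j : ι, X j ⊗ₜ[k] (Y j ⊗ₜ[k] Z j)) (hH : H.IsQuasiHopf) :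
    ∑ j : ι, (X j * H.β) * (H.S (Y j) * H.α * Z j) = (1:G) := by
  have h := hH.antipode_φ
  rw [hφ, map_sum, map_sum] at h
  simpa [mul_assoc] using h

lemma aux_k1_e13 (w : G ⊗[k] G) :
    H.κ1 (G ⊗[k] G) (QHA.e13 k G w)
      = (1:G) ⊗ₜ[k] ((TensorProduct.lid k G)
          ((TensorProduct.map H.ε.toLinearMap LinearMap.id) w)) := by
  induction w using TensorProduct.induction_on with
  | zero => simp
  | tmul x y => simp [aux_e13_tmul, aux_kappa1_tmul, TensorProduct.tmul_smul]
  | add u v hu hv => simp [hu, hv, TensorProduct.tmul_add]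

lemma aux_k1_hexLHS (hH : H.IsQuasiHopf) (w : G ⊗[k] G) :
    H.κ1 (G ⊗[k] G) ((Algebra.TensorProduct.assoc k k k G G G)
        ((Algebra.TensorProduct.map H.Δ (AlgHom.id k G)) w)) = w := by
  induction w using TensorProduct.induction_on with
  | zero => simp
  | tmul x y =>
      rw [Algebra.TensorProduct.map_tmul, aux_k1_assoc]
      simp [hH.counit_left]
  | add u v hu hv => simp [hu, hv]

lemma aux_ER_one (hH : H.IsQuasiHopf)
    (R Rinv : G ⊗[k] G) (hR : H.IsQT R Rinv)
    (hφ : H.φ = ∑ j : ι, X j ⊗ₜ[k] (Y j ⊗ₜ[k] Z j))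
    (hφ' : H.φ' = ∑ i : ι', P i ⊗ₜ[k] (Q i ⊗ₜ[k] R₀ i)) :
    (TensorProduct.lid k G) ((TensorProduct.map H.ε.toLinearMap LinearMap.id) R) = (1:G) := by
  set ER : G := (TensorProduct.lid k G) ((TensorProduct.map H.ε.toLinearMap LinearMap.id) R)
    with hER
  have h := congrArg (H.κ1 (G ⊗[k] G)) hR.hexagon1
  simp only [map_mul] at h
  rw [aux_k1_hexLHS H hH] at h
  have p1 : H.κ1 (G ⊗[k] G) (QHA.c23 k G (QHA.c12 k G H.φ)) = 1 := by
    rw [hφ, map_sum, map_sum, map_sum]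
    have : ∀ j : ι, H.κ1 (G ⊗[k] G) (QHA.c23 k G (QHA.c12 k G (X j ⊗ₜ[k] (Y j ⊗ₜ[k] Z j))))
        = H.ε (Y j) • (Z j ⊗ₜ[k] X j) := by
      intro j; rw [aux_c12_tmul, aux_c23_tmul, aux_kappa1_tmul]
    rw [Finset.sum_congr rfl (fun j _ => this j), aux_cm_sw H hφ hH]
  have p2 : H.κ1 (G ⊗[k] G) (QHA.e13 k G R) = (1:G) ⊗ₜ[k] ER := by
    rw [aux_k1_e13, hER]
  have p3 : H.κ1 (G ⊗[k] G) (QHA.c23 k G H.φ') = 1 := by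
    rw [hφ', map_sum, map_sum]
    have : ∀ i : ι', H.κ1 (G ⊗[k] G) (QHA.c23 k G (P i ⊗ₜ[k] (Q i ⊗ₜ[k] R₀ i)))
        = H.ε (P i) • (R₀ i ⊗ₜ[k] Q i) := by
      intro i; rw [aux_c23_tmul, aux_kappa1_tmul]
    rw [Finset.sum_congr rfl (fun i _ => this i), aux_e'_sw H hφ hφ' hH]
  have p4 : H.κ1 (G ⊗[k] G) (QHA.e23 k G R) = R := by
    rw [aux_e23_apply, aux_kappa1_tmul, map_one, one_smul]
  have p5 : H.κ1 (G ⊗[k] G) H.φ = 1 := by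
    rw [hφ, map_sum]
    simpa [aux_kappa1_tmul] using aux_e_one H hφ hφ' hH
  rw [p1, p2, p3, p4, p5, one_mul, mul_one, mul_one] at h
  -- h : R = (1 ⊗ ER) * R
  have h2 : (1:G) ⊗ₜ[k] ER = 1 := by
    calc (1:G) ⊗ₜ[k] ER = ((1:G) ⊗ₜ[k] ER) * (R * Rinv) := by rw [hR.mul_inv, mul_one]
      _ = (((1:G) ⊗ₜ[k] ER) * R) * Rinv := by rw [mul_assoc]
      _ = R * Rinv := by rw [← h]
      _ = 1 := hR.mul_inv
  have h3 := congrArg (H.κ1 G) h2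
  rw [aux_kappa1_tmul, map_one, one_smul, map_one] at h3
  exact h3

lemma aux_mapR (hH : H.IsQuasiHopf)
    (R Rinv : G ⊗[k] G) (hR : H.IsQT R Rinv)
    (hφ : H.φ = ∑ j : ι, X j ⊗ₜ[k] (Y j ⊗ₜ[k] Z j))
    (hφ' : H.φ' = ∑ i : ι', P i ⊗ₜ[k] (Q i ⊗ₜ[k] R₀ i)) :
    (TensorProduct.map ((auxHa H) ∘ₗ H.Δ.toLinearMap) LinearMap.id) R
      = H.α ⊗ₜ[k] (1:G) := by
  have key : ∀ w : G ⊗[k] G,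
      (TensorProduct.map ((auxHa H) ∘ₗ H.Δ.toLinearMap) LinearMap.id) w
        = H.α ⊗ₜ[k] ((TensorProduct.lid k G)
            ((TensorProduct.map H.ε.toLinearMap LinearMap.id) w)) := by
    intro w
    induction w using TensorProduct.induction_on with
    | zero => simp
    | tmul x y =>
        rw [TensorProduct.map_tmul, LinearMap.comp_apply]
        erw [auxHa_Δ H hH]
        simp [TensorProduct.smul_tmul, TensorProduct.tmul_smul]
    | add u v hu hv => simp [hu, hv, TensorProduct.tmul_add]
  rw [key, aux_ER_one H hH R Rinv hR hφ hφ']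

end Aux3
section Aux4
open QHA TensorProduct

variable {k G : Type} [Field k] [Ring G] [Algebra k G]

/-- `a ⊗ b ⊗ c ⊗ d ↦ (a β S(b) α c) ⊗ d`. -/
noncomputable def auxG3 (H : QuasiHopfData k G) :
    G ⊗[k] (G ⊗[k] (G ⊗[k] G)) →ₗ[k] G ⊗[k] G :=
  ((TensorProduct.map (LinearMap.mul' k G) LinearMap.id) ∘ₗ
    (TensorProduct.assoc k G G G).symm.toLinearMap) ∘ₗ
  (TensorProduct.map (LinearMap.mulRight k H.β)
    (((TensorProduct.map (LinearMap.mul' k G) LinearMap.id) ∘ₗ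
      (TensorProduct.assoc k G G G).symm.toLinearMap) ∘ₗ
      (TensorProduct.map ((LinearMap.mulRight k H.α) ∘ₗ H.S.toLinearMap) LinearMap.id)))

variable (H : QuasiHopfData k G)

lemma auxG3_tmul (a b c d : G) :
    auxG3 H (a ⊗ₜ[k] (b ⊗ₜ[k] (c ⊗ₜ[k] d)))
      = (a * H.β * (H.S b * H.α * c)) ⊗ₜ[k] d := by
  simp [auxG3, mul_assoc]

lemma auxG3_tmul_left (a b : G) (t : G ⊗[k] G) :
    auxG3 H (a ⊗ₜ[k] (b ⊗ₜ[k] t))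
      = ((a * H.β * (H.S b * H.α)) ⊗ₜ[k] (1:G)) * t := by
  induction t using TensorProduct.induction_on with
  | zero => simp [TensorProduct.tmul_zero]
  | tmul c d =>
      simp only [auxG3_tmul, Algebra.TensorProduct.tmul_mul_tmul, one_mul, mul_assoc]
  | add u v hu hv => simp [TensorProduct.tmul_add, hu, hv, mul_add]

/-- The pentagon rearranged. -/
lemma aux_I (hH : H.IsQuasiHopf) :
    ((1:G) ⊗ₜ[k] H.φ') * H.ooΔ H.φ
      = H.oΔo H.φ * QHA.padR k G H.φ * H.Δoo H.φ' := by
  have hΔinv : H.Δoo H.φ * H.Δoo H.φ' = 1 := by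
    rw [← map_mul, hH.φ_mul_inv, map_one]
  have h1 : ((1:G) ⊗ₜ[k] H.φ') * ((1:G) ⊗ₜ[k] H.φ) = 1 := by
    rw [Algebra.TensorProduct.tmul_mul_tmul, one_mul, hH.φ_inv_mul]
    rfl
  have key : H.ooΔ H.φ = ((1:G) ⊗ₜ[k] H.φ) * H.oΔo H.φ * QHA.padR k G H.φ * H.Δoo H.φ' := by
    calc H.ooΔ H.φ = H.ooΔ H.φ * (H.Δoo H.φ * H.Δoo H.φ') := by rw [hΔinv, mul_one]
      _ = (H.ooΔ H.φ * H.Δoo H.φ) * H.Δoo H.φ' := by rw [mul_assoc]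
      _ = ((1:G) ⊗ₜ[k] H.φ) * H.oΔo H.φ * QHA.padR k G H.φ * H.Δoo H.φ' := by
          rw [hH.pentagon]
  rw [key]
  simp only [← mul_assoc]
  rw [h1, one_mul]

/-- `Γ₃` of a generic triple product appearing in the RHS of `aux_I`. -/
lemma aux_g2 (hH : H.IsQuasiHopf) (x₁ z₁ x₂ y₂ z₂ v w : G) (s t : G ⊗[k] G) :
    auxG3 H ((x₁ ⊗ₜ[k] (Algebra.TensorProduct.assoc k k k G G G) (s ⊗ₜ[k] z₁))
        * (x₂ ⊗ₜ[k] (y₂ ⊗ₜ[k] (z₂ ⊗ₜ[k] (1:G))))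
        * ((Algebra.TensorProduct.assoc k k k G G (G ⊗[k] G)) (t ⊗ₜ[k] (v ⊗ₜ[k] w))))
      = (x₁ * x₂ * auxHb H t * H.S y₂ * auxHa H s * z₂ * v) ⊗ₜ[k] (z₁ * w) := by
  induction s using TensorProduct.induction_on with
  | zero => simp [TensorProduct.zero_tmul, TensorProduct.tmul_zero]
  | tmul s1 s2 =>
      induction t using TensorProduct.induction_on with
      | zero => simp [TensorProduct.zero_tmul, TensorProduct.tmul_zero]
      | tmul t1 t2 =>
          rw [Algebra.TensorProduct.assoc_tmul, Algebra.TensorProduct.assoc_tmul]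
          rw [Algebra.TensorProduct.tmul_mul_tmul, Algebra.TensorProduct.tmul_mul_tmul,
            Algebra.TensorProduct.tmul_mul_tmul, Algebra.TensorProduct.tmul_mul_tmul,
            Algebra.TensorProduct.tmul_mul_tmul, Algebra.TensorProduct.tmul_mul_tmul]
          rw [auxG3_tmul, auxHa_tmul, auxHb_tmul]
          simp [hH.S_mul, mul_assoc]
      | add t1 t2 h1 h2 =>
          simp only [TensorProduct.add_tmul, map_add, mul_add, add_mul, h1, h2,
            TensorProduct.tmul_add]
  | add s1 s2 h1 h2 =>
      simp only [TensorProduct.add_tmul, TensorProduct.tmul_add, map_add, mul_add,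
        add_mul, h1, h2]

variable {ι ι' : Type} [Fintype ι] [Fintype ι']
variable {X Y Z : ι → G} {P Q R₀ : ι' → G}

/-- The key normalization identity `E₂ = 1`. -/
lemma aux_E2 (hH : H.IsQuasiHopf)
    (hφ : H.φ = ∑ j : ι, X j ⊗ₜ[k] (Y j ⊗ₜ[k] Z j))
    (hφ' : H.φ' = ∑ i : ι', P i ⊗ₜ[k] (Q i ⊗ₜ[k] R₀ i)) :
    ∑ j : ι, ∑ m : ι',
      ((X j * H.β * (H.S (P m * Y j) * H.α)) ⊗ₜ[k] (1:G))
        * ((Q m ⊗ₜ[k] R₀ m) * H.Δ (Z j)) = (1 : G ⊗[k] G) := by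
  -- Step A: the sum is `Γ₃` of the LHS of `aux_I`.
  have stepA : auxG3 H (((1:G) ⊗ₜ[k] H.φ') * H.ooΔ H.φ)
      = ∑ j : ι, ∑ m : ι',
        ((X j * H.β * (H.S (P m * Y j) * H.α)) ⊗ₜ[k] (1:G))
          * ((Q m ⊗ₜ[k] R₀ m) * H.Δ (Z j)) := by
    rw [Finset.sum_comm]
    rw [hφ, hφ', map_sum, TensorProduct.tmul_sum, Finset.sum_mul_sum]
    simp only [map_sum]
    refine Finset.sum_congr rfl fun m _ => ?_
    refine Finset.sum_congr rfl fun j _ => ?_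
    rw [aux_ooD_tmul, Algebra.TensorProduct.tmul_mul_tmul, one_mul,
      Algebra.TensorProduct.tmul_mul_tmul]
    rw [auxG3_tmul_left]
  -- Step B: `Γ₃` of the RHS of `aux_I` is `1`.
  have hpad : QHA.padR k G (∑ n : ι, X n ⊗ₜ[k] (Y n ⊗ₜ[k] Z n))
      = ∑ n : ι, X n ⊗ₜ[k] (Y n ⊗ₜ[k] (Z n ⊗ₜ[k] (1:G))) := by
    unfold QHA.padR
    rw [TensorProduct.sum_tmul, map_sum, map_sum]
    exact Finset.sum_congr rfl fun n _ => aux_padR_tmul (k := k) (X n) (Y n) (Z n)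
  have main : (∑ l : ι, H.ε (Y l) • (X l ⊗ₜ[k] Z l)) *
      ((∑ n : ι, (X n * H.β) * (H.S (Y n) * H.α * Z n)) ⊗ₜ[k] (1:G)) *
      (∑ m : ι', H.ε (P m) • (Q m ⊗ₜ[k] R₀ m))
      = auxG3 H (H.oΔo H.φ * QHA.padR k G H.φ * H.Δoo H.φ') := by
    rw [hφ, hφ', hpad, TensorProduct.sum_tmul]
    simp only [map_sum, Finset.sum_mul, Finset.mul_sum]
    refine Finset.sum_congr rfl fun m _ => ?_
    refine Finset.sum_congr rfl fun l _ => ?_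
    refine Finset.sum_congr rfl fun n _ => ?_
    rw [aux_oDo_tmul, aux_Doo_tmul, aux_g2 H hH, auxHa_Δ H hH, auxHb_Δ H hH]
    simp only [smul_mul_assoc, mul_smul_comm, smul_smul, TensorProduct.smul_tmul',
      TensorProduct.tmul_smul, Algebra.TensorProduct.tmul_mul_tmul, one_mul, mul_one]
    rw [mul_comm (H.ε (P m)) (H.ε (Y n))]
    congr 1
    congr 1
    simp only [mul_assoc]
  have stepB : auxG3 H (H.oΔo H.φ * QHA.padR k G H.φ * H.Δoo H.φ') = 1 := by
    rw [← main, aux_cm H hφ hH, aux_aphi H hφ hH, aux_e'_one H hφ hφ' hH]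
    rw [← Algebra.TensorProduct.one_def, one_mul, mul_one]
  have := aux_I H hH
  rw [← stepA, this, stepB]
section Aux5
open QHA TensorProduct

variable {k G : Type} [Field k] [Ring G] [Algebra k G]

/-- `a ⊗ w ↦ ((u S(a v)) ⊗ 1) * (s * w) * d`. -/
noncomputable def auxPhi (H : QuasiHopfData k G) (s d : G ⊗[k] G) (u v : G) :
    G ⊗[k] (G ⊗[k] G) →ₗ[k] G ⊗[k] G :=
  (LinearMap.mulRight k d) ∘ₗ (LinearMap.mul' k (G ⊗[k] G)) ∘ₗ
    (TensorProduct.map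
      (Algebra.TensorProduct.includeLeft.toLinearMap ∘ₗ (LinearMap.mulLeft k u) ∘ₗ
        H.S.toLinearMap ∘ₗ (LinearMap.mulRight k v))
      (LinearMap.mulLeft k s))

variable (H : QuasiHopfData k G)

lemma auxPhi_tmul (s d : G ⊗[k] G) (u v : G) (a : G) (w : G ⊗[k] G) :
    auxPhi H s d u v (a ⊗ₜ[k] w)
      = (((u * H.S (a * v)) ⊗ₜ[k] (1:G)) * (s * w)) * d := by
  simp [auxPhi]

/-- The telescoping lemma: `Λ (φ φ') = α ⊗ 1`. -/
lemma aux_tlem (hH : H.IsQuasiHopf) {ι ι' : Type} [Fintype ι] [Fintype ι']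
    {X Y Z : ι → G} {P Q R₀ : ι' → G}
    (hφ : H.φ = ∑ j : ι, X j ⊗ₜ[k] (Y j ⊗ₜ[k] Z j))
    (hφ' : H.φ' = ∑ i : ι', P i ⊗ₜ[k] (Q i ⊗ₜ[k] R₀ i)) :
    ∑ l : ι, ∑ i : ι',
        (H.S (Y l * Q i) * H.α * (Z l * R₀ i)) ⊗ₜ[k] (X l * P i)
      = H.α ⊗ₜ[k] (1:G) := by
  have h := hH.φ_mul_inv
  rw [hφ, hφ', Finset.sum_mul_sum] at h
  simp only [Algebra.TensorProduct.tmul_mul_tmul] at h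
  have h2 := congrArg
    ((TensorProduct.comm k G G).toLinearMap ∘ₗ
      (TensorProduct.map LinearMap.id (auxHa H))) h
  simp only [map_sum] at h2
  have hL : ∀ (a b c : G),
      ((TensorProduct.comm k G G).toLinearMap ∘ₗ
        (TensorProduct.map LinearMap.id (auxHa H))) (a ⊗ₜ[k] (b ⊗ₜ[k] c))
      = (H.S b * H.α * c) ⊗ₜ[k] a := by
    intro a b c
    simp [auxHa_tmul]
  have hRR : ((TensorProduct.comm k G G).toLinearMap ∘ₗ
      (TensorProduct.map LinearMap.id (auxHa H))) (1 : G ⊗[k] (G ⊗[k] G))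
      = H.α ⊗ₜ[k] (1:G) := by
    have h1 : (1 : G ⊗[k] (G ⊗[k] G)) = (1:G) ⊗ₜ[k] ((1:G) ⊗ₜ[k] (1:G)) := rfl
    rw [h1, hL, hH.S_one, one_mul, mul_one]
  rw [hRR] at h2
  rw [← h2]
  refine Finset.sum_congr rfl fun l _ => ?_
  refine Finset.sum_congr rfl fun i _ => ?_
  rw [hL]

/-- Rewriting one summand of `E·R` through `Φ`. -/
lemma aux_lemPhi (hH : H.IsQuasiHopf) {ι ι' : Type} [Fintype ι] [Fintype ι']
    (X Y Z : ι → G) (p q r : ι' → G) (u v : G) (d : G ⊗[k] G) (ρ σ : G ⊗[k] G) :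
    ∑ i : ι', ((u * H.S (p i * v)) ⊗ₜ[k] (1:G)) *
      ((TensorProduct.map H.S.toLinearMap LinearMap.id)
        ((∑ l : ι, (H.S.symm (H.α * Z l) * Y l) ⊗ₜ[k] X l) * ρ) *
       ((q i ⊗ₜ[k] r i) * (σ * d)))
    = auxPhi H (∑ l : ι, (H.S (Y l) * H.α * Z l) ⊗ₜ[k] X l) d u v
        (QHA.e13 k G ρ * (∑ i : ι', p i ⊗ₜ[k] (q i ⊗ₜ[k] r i)) * QHA.e23 k G σ) := by
  induction ρ using TensorProduct.induction_on with
  | zero => simp [Finset.sum_mul, Finset.mul_sum]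
  | tmul x y =>
      induction σ using TensorProduct.induction_on with
      | zero => simp [Finset.sum_mul, Finset.mul_sum]
      | tmul x' y' =>
          rw [aux_e13_tmul, aux_e23_apply]
          simp only [Finset.sum_mul, Finset.mul_sum, map_sum,
            Algebra.TensorProduct.tmul_mul_tmul, TensorProduct.map_tmul,
            auxPhi_tmul, LinearEquiv.coe_coe, LinearMap.id_coe, id_eq]
          refine Finset.sum_congr rfl fun i _ => ?_
          refine Finset.sum_congr rfl fun l _ => ?_
          simp only [← mul_assoc]
          simp only [Algebra.TensorProduct.tmul_mul_tmul]
          congr 1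
          congr 1
          · simp [hH.S_mul, mul_assoc]
          · simp [mul_assoc]
      | add σ1 σ2 h1 h2 =>
          simp only [mul_add, add_mul, map_add, Finset.sum_add_distrib, h1, h2]
  | add ρ1 ρ2 h1 h2 =>
      simp only [mul_add, add_mul, map_add, Finset.sum_add_distrib, h1, h2]

/-- The sandwich collapse using the telescoping lemma. -/
lemma aux_lemPsi (hH : H.IsQuasiHopf) {ι ι' : Type} [Fintype ι] [Fintype ι']
    (X Y Z : ι → G) (P Q R₀ : ι' → G)
    (htel : ∑ l : ι, ∑ i : ι',
        (H.S (Y l * Q i) * H.α * (Z l * R₀ i)) ⊗ₜ[k] (X l * P i) = H.α ⊗ₜ[k] (1:G))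
    (u v : G) (d : G ⊗[k] G) (pm qm rm : G) (t : G ⊗[k] G) (c : G) :
    ∑ i : ι', auxPhi H (∑ l : ι, (H.S (Y l) * H.α * Z l) ⊗ₜ[k] X l) d u v
        ((Q i ⊗ₜ[k] (R₀ i ⊗ₜ[k] P i)) * (Algebra.TensorProduct.assoc k k k G G G) (t ⊗ₜ[k] c)
          * (pm ⊗ₜ[k] (qm ⊗ₜ[k] rm)))
      = ((u * H.S (pm * v)) ⊗ₜ[k] (1:G)) * (((auxHa H) t) ⊗ₜ[k] c) * ((qm ⊗ₜ[k] rm) * d) := by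
  induction t using TensorProduct.induction_on with
  | zero => simp [TensorProduct.zero_tmul]
  | tmul t1 t2 =>
      rw [Algebra.TensorProduct.assoc_tmul]
      have hF : ((u * H.S (pm * v)) ⊗ₜ[k] (1:G)) * (((auxHa H) (t1 ⊗ₜ[k] t2)) ⊗ₜ[k] c)
            * ((qm ⊗ₜ[k] rm) * d)
          = ((u * H.S (pm * v) * H.S t1) ⊗ₜ[k] (1:G)) *
              ((H.α ⊗ₜ[k] (1:G)) * (((t2 * qm) ⊗ₜ[k] (c * rm)) * d)) := by
        rw [auxHa_tmul]
        simp only [← mul_assoc]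
        simp only [Algebra.TensorProduct.tmul_mul_tmul]
        congr 1
        congr 1
        · simp [mul_assoc]
        · simp
      rw [hF, ← htel]
      simp only [Finset.sum_mul, Finset.mul_sum, map_sum,
        Algebra.TensorProduct.tmul_mul_tmul, auxPhi_tmul]
      rw [Finset.sum_comm]
      refine Finset.sum_congr rfl fun i _ => ?_
      refine Finset.sum_congr rfl fun l _ => ?_
      simp only [← mul_assoc]
      simp only [Algebra.TensorProduct.tmul_mul_tmul]
      congr 1
      congr 1
      · simp [hH.S_mul, mul_assoc]
      · simp [mul_assoc]
  | add t1 t2 h1 h2 =>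
      simp only [TensorProduct.add_tmul, map_add, mul_add, add_mul,
        Finset.sum_add_distrib, h1, h2, TensorProduct.tmul_add]

/-- `Ψ` applied to the hexagon sandwich, with `R` in place. -/
lemma aux_lemPsiR (hH : H.IsQuasiHopf) {ι ι' : Type} [Fintype ι] [Fintype ι']
    (X Y Z : ι → G) (P Q R₀ : ι' → G)
    (htel : ∑ l : ι, ∑ i : ι',
        (H.S (Y l * Q i) * H.α * (Z l * R₀ i)) ⊗ₜ[k] (X l * P i) = H.α ⊗ₜ[k] (1:G))
    (u v : G) (d : G ⊗[k] G) (pm qm rm : G) (ρ : G ⊗[k] G) :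
    ∑ i : ι', auxPhi H (∑ l : ι, (H.S (Y l) * H.α * Z l) ⊗ₜ[k] X l) d u v
        ((Q i ⊗ₜ[k] (R₀ i ⊗ₜ[k] P i)) *
          ((Algebra.TensorProduct.assoc k k k G G G)
            ((Algebra.TensorProduct.map H.Δ (AlgHom.id k G)) ρ))
          * (pm ⊗ₜ[k] (qm ⊗ₜ[k] rm)))
      = ((u * H.S (pm * v)) ⊗ₜ[k] (1:G)) *
          ((TensorProduct.map ((auxHa H) ∘ₗ H.Δ.toLinearMap) LinearMap.id) ρ) *
          ((qm ⊗ₜ[k] rm) * d) := by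
  induction ρ using TensorProduct.induction_on with
  | zero => simp
  | tmul x y =>
      rw [Algebra.TensorProduct.map_tmul]
      have := aux_lemPsi H hH X Y Z P Q R₀ htel u v d pm qm rm (H.Δ x) y
      simp only [AlgHom.coe_id, id_eq] at this ⊢
      rw [this]
      simp [TensorProduct.map_tmul]
  | add ρ1 ρ2 h1 h2 =>
      simp only [map_add, mul_add, add_mul, Finset.sum_add_distrib, h1, h2]

end Aux5

open QHA in
/-- For a finite-dimensional quasi-Hopf algebra `(G,Δ,ε,φ,S,α,β)`
with invertible antipode and a quasitriangular `R` (with inverse `Rinv`), writing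
`φ = Xʲ⊗Yʲ⊗Zʲ` and `φ⁻¹ = Pⁱ⊗Qⁱ⊗Rⁱ` and `q_ρ = Xⁱ ⊗ S⁻¹(α·Zⁱ)·Yⁱ`, one has
`R⁻¹ = [Xʲ β S(Pⁱ Yʲ) ⊗ 1] · (S⊗id)(q_ρᵒᵖ·R) · [(Rⁱ⊗Qⁱ)·Δᵒᵖ(Zʲ)]`. -/
theorem statement0
    (k G : Type) [Field k] [Ring G] [Algebra k G] [FiniteDimensional k G]
    (H : QuasiHopfData k G) (hH : H.IsQuasiHopf)
    (R Rinv : G ⊗[k] G) (hR : H.IsQT R Rinv)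
    (ι ι' : Type) [Fintype ι] [Fintype ι']
    (X Y Z : ι → G) (P Q R₀ : ι' → G)
    (hφ : H.φ = ∑ j : ι, X j ⊗ₜ[k] (Y j ⊗ₜ[k] Z j))
    (hφ' : H.φ' = ∑ i : ι', P i ⊗ₜ[k] (Q i ⊗ₜ[k] R₀ i)) :
    Rinv = ∑ j : ι, ∑ i : ι',
      ((X j * H.β * H.S (P i * Y j)) ⊗ₜ[k] (1:G)) *
      (TensorProduct.map H.S.toLinearMap LinearMap.id
        ((∑ l : ι, (H.S.symm (H.α * Z l) * Y l) ⊗ₜ[k] X l) * R)) *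
      ((R₀ i ⊗ₜ[k] Q i) * H.Δop (Z j)) := by
  classical
  have htel := aux_tlem H hH hφ hφ'
  have hmapR := aux_mapR H hH R Rinv hR hφ hφ'
  have hE2 := aux_E2 H hH hφ hφ'
  set D : G ⊗[k] (G ⊗[k] G) :=
    (Algebra.TensorProduct.assoc k k k G G G)
      ((Algebra.TensorProduct.map H.Δ (AlgHom.id k G)) R) with hD
  -- the hexagon sandwich rewrite
  have harg : QHA.e13 k G R * (∑ i : ι', P i ⊗ₜ[k] (R₀ i ⊗ₜ[k] Q i)) * QHA.e23 k G R
      = (∑ i : ι', Q i ⊗ₜ[k] (R₀ i ⊗ₜ[k] P i)) * D * H.φ' := by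
    have hc23 : QHA.c23 k G H.φ' = ∑ i : ι', P i ⊗ₜ[k] (R₀ i ⊗ₜ[k] Q i) := by
      rw [hφ', map_sum]
      exact Finset.sum_congr rfl fun i _ => aux_c23_tmul (P i) (Q i) (R₀ i)
    have hc2312 : QHA.c23 k G (QHA.c12 k G H.φ') = ∑ i : ι', Q i ⊗ₜ[k] (R₀ i ⊗ₜ[k] P i) := by
      rw [hφ', map_sum, map_sum]
      refine Finset.sum_congr rfl fun i _ => ?_
      rw [aux_c12_tmul, aux_c23_tmul]
    have h1 : QHA.c23 k G (QHA.c12 k G H.φ') * QHA.c23 k G (QHA.c12 k G H.φ) = 1 := by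
      rw [← map_mul, ← map_mul, hH.φ_inv_mul, map_one, map_one]
    rw [← hc23, ← hc2312, hD, hR.hexagon1]
    simp only [← mul_assoc]
    rw [h1, one_mul, mul_assoc _ H.φ H.φ', hH.φ_mul_inv, mul_one]
  have hER : (∑ j : ι, ∑ i : ι',
      ((X j * H.β * H.S (P i * Y j)) ⊗ₜ[k] (1:G)) *
      (TensorProduct.map H.S.toLinearMap LinearMap.id
        ((∑ l : ι, (H.S.symm (H.α * Z l) * Y l) ⊗ₜ[k] X l) * R)) *
      ((R₀ i ⊗ₜ[k] Q i) * H.Δop (Z j))) * R = 1 := by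
    calc (∑ j : ι, ∑ i : ι',
        ((X j * H.β * H.S (P i * Y j)) ⊗ₜ[k] (1:G)) *
        (TensorProduct.map H.S.toLinearMap LinearMap.id
          ((∑ l : ι, (H.S.symm (H.α * Z l) * Y l) ⊗ₜ[k] X l) * R)) *
        ((R₀ i ⊗ₜ[k] Q i) * H.Δop (Z j))) * R
        = ∑ j : ι, ∑ i : ι',
          ((X j * H.β) * H.S (P i * Y j)) ⊗ₜ[k] (1:G) *
          ((TensorProduct.map H.S.toLinearMap LinearMap.id
            ((∑ l : ι, (H.S.symm (H.α * Z l) * Y l) ⊗ₜ[k] X l) * R)) *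
          ((R₀ i ⊗ₜ[k] Q i) * (R * H.Δ (Z j)))) := by
          simp only [Finset.sum_mul]
          refine Finset.sum_congr rfl fun j _ => ?_
          refine Finset.sum_congr rfl fun i _ => ?_
          simp only [mul_assoc]
          rw [← hR.intertwine (Z j)]
      _ = ∑ j : ι, auxPhi H (∑ l : ι, (H.S (Y l) * H.α * Z l) ⊗ₜ[k] X l)
            (H.Δ (Z j)) (X j * H.β) (Y j)
            (QHA.e13 k G R * (∑ i : ι', P i ⊗ₜ[k] (R₀ i ⊗ₜ[k] Q i)) * QHA.e23 k G R) := by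
          refine Finset.sum_congr rfl fun j _ => ?_
          exact aux_lemPhi H hH X Y Z P R₀ Q (X j * H.β) (Y j) (H.Δ (Z j)) R R
      _ = ∑ j : ι, auxPhi H (∑ l : ι, (H.S (Y l) * H.α * Z l) ⊗ₜ[k] X l)
            (H.Δ (Z j)) (X j * H.β) (Y j)
            ((∑ i : ι', Q i ⊗ₜ[k] (R₀ i ⊗ₜ[k] P i)) * D * H.φ') := by
          rw [harg]
      _ = ∑ j : ι, ∑ m : ι', ∑ i : ι',
            auxPhi H (∑ l : ι, (H.S (Y l) * H.α * Z l) ⊗ₜ[k] X l)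
              (H.Δ (Z j)) (X j * H.β) (Y j)
              ((Q i ⊗ₜ[k] (R₀ i ⊗ₜ[k] P i)) * D * (P m ⊗ₜ[k] (Q m ⊗ₜ[k] R₀ m))) := by
          rw [hφ']
          simp only [Finset.sum_mul, Finset.mul_sum, map_sum]
      _ = ∑ j : ι, ∑ m : ι',
            ((X j * H.β) * H.S (P m * Y j)) ⊗ₜ[k] (1:G) *
              ((TensorProduct.map ((auxHa H) ∘ₗ H.Δ.toLinearMap) LinearMap.id) R) *
              ((Q m ⊗ₜ[k] R₀ m) * H.Δ (Z j)) := by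
          refine Finset.sum_congr rfl fun j _ => ?_
          refine Finset.sum_congr rfl fun m _ => ?_
          exact aux_lemPsiR H hH X Y Z P Q R₀ htel (X j * H.β) (Y j) (H.Δ (Z j))
            (P m) (Q m) (R₀ m) R
      _ = ∑ j : ι, ∑ m : ι',
            ((X j * H.β * (H.S (P m * Y j) * H.α)) ⊗ₜ[k] (1:G))
              * ((Q m ⊗ₜ[k] R₀ m) * H.Δ (Z j)) := by
          refine Finset.sum_congr rfl fun j _ => ?_
          refine Finset.sum_congr rfl fun m _ => ?_
          rw [hmapR]
          rw [Algebra.TensorProduct.tmul_mul_tmul, mul_one]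
          simp only [mul_assoc]
      _ = 1 := hE2
  calc Rinv = 1 * Rinv := (one_mul _).symm
    _ = ((∑ j : ι, ∑ i : ι',
          ((X j * H.β * H.S (P i * Y j)) ⊗ₜ[k] (1:G)) *
          (TensorProduct.map H.S.toLinearMap LinearMap.id
            ((∑ l : ι, (H.S.symm (H.α * Z l) * Y l) ⊗ₜ[k] X l) * R)) *
          ((R₀ i ⊗ₜ[k] Q i) * H.Δop (Z j))) * R) * Rinv := by rw [hER]
    _ = (∑ j : ι, ∑ i : ι',
          ((X j * H.β * H.S (P i * Y j)) ⊗ₜ[k] (1:G)) *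
          (TensorProduct.map H.S.toLinearMap LinearMap.id
            ((∑ l : ι, (H.S.symm (H.α * Z l) * Y l) ⊗ₜ[k] X l) * R)) *
          ((R₀ i ⊗ₜ[k] Q i) * H.Δop (Z j))) * (R * Rinv) := by rw [mul_assoc]
    _ = _ := by rw [hR.mul_inv, mul_one]
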